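/- If G is the complement of a twister (a specific 10-vertex graph), then the clique cover number of G equals 10. -/

import Mathlib

open SimpleGraph

/-- A finite collection of cliques of `G` covering every edge of `G`. -/
def IsEdgeCliqueCover {V : Type*} (G : SimpleGraph V) (𝒞 : Finset (Set V)) : Prop :=
  (∀ C ∈ 𝒞, G.IsClique C) ∧ ∀ ⦃u v : V⦄, G.Adj u v → ∃ C ∈ 𝒞, u ∈ C ∧ v ∈ C

/-- The (edge) clique cover number of `G`: the least size of an edge clique covering. -/
noncomputable def edgeCliqueCoverNumber {V : Type*} (G : SimpleGraph V) : ℕ :=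
  sInf {k | ∃ 𝒞 : Finset (Set V), IsEdgeCliqueCover G 𝒞 ∧ 𝒞.card = k}

/-- The ten triangles of the complement of a twister, on vertices `u_1 = 0`, `u_2 = 1`,
`v_i = i + 1` for `1 ≤ i ≤ 8`:
`{u_2,v_1,v_7}, {u_2,v_3,v_5}, {u_1,v_4,v_6}, {u_1,v_2,v_8}, {v_1,v_3,v_6}, {v_2,v_5,v_7},
{v_3,v_6,v_8}, {v_3,v_5,v_8}, {v_1,v_4,v_7}, {v_2,v_4,v_7}`. -/
def twisterComplementCliques : List (Finset (Fin 10)) :=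
  [{1, 2, 8}, {1, 4, 6}, {0, 5, 7}, {0, 3, 9}, {2, 4, 7},
   {3, 6, 8}, {4, 7, 9}, {4, 6, 9}, {2, 5, 8}, {3, 5, 8}]

/-- The complement of a twister: the 10-vertex graph whose edges are exactly the pairs lying
in one of the ten listed triangles. -/
def twisterComplement : SimpleGraph (Fin 10) :=
  SimpleGraph.fromRel (fun u v => ∃ C ∈ twisterComplementCliques, u ∈ C ∧ v ∈ C)

instance : DecidableRel twisterComplement.Adj := fun u v =>
  decidable_of_iff _ (SimpleGraph.fromRel_adj _ u v).symm

/-- All sixteen triangles of `twisterComplement`. -/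
def T16 : List (Finset (Fin 10)) :=
  [{0, 3, 5},
   {0, 3, 9},
   {0, 5, 7},
   {0, 7, 9},
   {1, 2, 4},
   {1, 2, 8},
   {1, 4, 6},
   {1, 6, 8},
   {2, 4, 7},
   {2, 5, 7},
   {2, 5, 8},
   {3, 5, 8},
   {3, 6, 8},
   {3, 6, 9},
   {4, 6, 9},
   {4, 7, 9}]

lemma B2 : ∀ u v : Fin 10, twisterComplement.Adj u v →
    ∃ t ∈ T16, u ∈ t ∧ v ∈ t := by decide

lemma B3 : ∀ u v w : Fin 10, twisterComplement.Adj u v → twisterComplement.Adj u w →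
    twisterComplement.Adj v w → ∃ t ∈ T16, u ∈ t ∧ v ∈ t ∧ w ∈ t := by decide

lemma B4 : ∀ u v w x : Fin 10, twisterComplement.Adj u v → twisterComplement.Adj u w →
    twisterComplement.Adj u x → twisterComplement.Adj v w → twisterComplement.Adj v x →
    twisterComplement.Adj w x → False := by decide


set_option maxHeartbeats 4000000 in
lemma coverBound : ∀ b0 b1 b2 b3 b4 b5 b6 b7 b8 b9 b10 b11 b12 b13 b14 b15 : Bool,
    ((b0 || b1) &&
     (b0 || b2) &&
     (b2 || b3) &&
     (b1 || b3) &&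
     (b4 || b5) &&
     (b4 || b6) &&
     (b6 || b7) &&
     (b5 || b7) &&
     (b4 || b8) &&
     (b9 || b10) &&
     (b8 || b9) &&
     (b5 || b10) &&
     (b0 || b11) &&
     (b12 || b13) &&
     (b11 || b12) &&
     (b1 || b13) &&
     (b6 || b14) &&
     (b8 || b15) &&
     (b14 || b15) &&
     (b2 || b9) &&
     (b10 || b11) &&
     (b7 || b12) &&
     (b13 || b14) &&
     (b3 || b15)) = true →
    10 ≤ (cond b0 1 0) + (cond b1 1 0) + (cond b2 1 0) + (cond b3 1 0) + (cond b4 1 0) + (cond b5 1 0) + (cond b6 1 0) + (cond b7 1 0) + (cond b8 1 0) + (cond b9 1 0) + (cond b10 1 0) + (cond b11 1 0) + (cond b12 1 0) + (cond b13 1 0) + (cond b14 1 0) + (cond b15 1 0) := by decide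

lemma U0 : ∀ t ∈ T16, (0 : Fin 10) ∈ t → (3 : Fin 10) ∈ t → t = ({0, 3, 5} : Finset (Fin 10)) ∨ t = ({0, 3, 9} : Finset (Fin 10)) := by
  intro t ht
  simp only [T16, List.mem_cons, List.not_mem_nil, or_false] at ht
  rcases ht with rfl | rfl | rfl | rfl | rfl | rfl | rfl | rfl | rfl | rfl | rfl | rfl | rfl | rfl | rfl | rfl <;> decide
lemma U1 : ∀ t ∈ T16, (0 : Fin 10) ∈ t → (5 : Fin 10) ∈ t → t = ({0, 3, 5} : Finset (Fin 10)) ∨ t = ({0, 5, 7} : Finset (Fin 10)) := by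
  intro t ht
  simp only [T16, List.mem_cons, List.not_mem_nil, or_false] at ht
  rcases ht with rfl | rfl | rfl | rfl | rfl | rfl | rfl | rfl | rfl | rfl | rfl | rfl | rfl | rfl | rfl | rfl <;> decide
lemma U2 : ∀ t ∈ T16, (0 : Fin 10) ∈ t → (7 : Fin 10) ∈ t → t = ({0, 5, 7} : Finset (Fin 10)) ∨ t = ({0, 7, 9} : Finset (Fin 10)) := by
  intro t ht
  simp only [T16, List.mem_cons, List.not_mem_nil, or_false] at ht
  rcases ht with rfl | rfl | rfl | rfl | rfl | rfl | rfl | rfl | rfl | rfl | rfl | rfl | rfl | rfl | rfl | rfl <;> decide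
lemma U3 : ∀ t ∈ T16, (0 : Fin 10) ∈ t → (9 : Fin 10) ∈ t → t = ({0, 3, 9} : Finset (Fin 10)) ∨ t = ({0, 7, 9} : Finset (Fin 10)) := by
  intro t ht
  simp only [T16, List.mem_cons, List.not_mem_nil, or_false] at ht
  rcases ht with rfl | rfl | rfl | rfl | rfl | rfl | rfl | rfl | rfl | rfl | rfl | rfl | rfl | rfl | rfl | rfl <;> decide
lemma U4 : ∀ t ∈ T16, (1 : Fin 10) ∈ t → (2 : Fin 10) ∈ t → t = ({1, 2, 4} : Finset (Fin 10)) ∨ t = ({1, 2, 8} : Finset (Fin 10)) := by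
  intro t ht
  simp only [T16, List.mem_cons, List.not_mem_nil, or_false] at ht
  rcases ht with rfl | rfl | rfl | rfl | rfl | rfl | rfl | rfl | rfl | rfl | rfl | rfl | rfl | rfl | rfl | rfl <;> decide
lemma U5 : ∀ t ∈ T16, (1 : Fin 10) ∈ t → (4 : Fin 10) ∈ t → t = ({1, 2, 4} : Finset (Fin 10)) ∨ t = ({1, 4, 6} : Finset (Fin 10)) := by
  intro t ht
  simp only [T16, List.mem_cons, List.not_mem_nil, or_false] at ht
  rcases ht with rfl | rfl | rfl | rfl | rfl | rfl | rfl | rfl | rfl | rfl | rfl | rfl | rfl | rfl | rfl | rfl <;> decide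
lemma U6 : ∀ t ∈ T16, (1 : Fin 10) ∈ t → (6 : Fin 10) ∈ t → t = ({1, 4, 6} : Finset (Fin 10)) ∨ t = ({1, 6, 8} : Finset (Fin 10)) := by
  intro t ht
  simp only [T16, List.mem_cons, List.not_mem_nil, or_false] at ht
  rcases ht with rfl | rfl | rfl | rfl | rfl | rfl | rfl | rfl | rfl | rfl | rfl | rfl | rfl | rfl | rfl | rfl <;> decide
lemma U7 : ∀ t ∈ T16, (1 : Fin 10) ∈ t → (8 : Fin 10) ∈ t → t = ({1, 2, 8} : Finset (Fin 10)) ∨ t = ({1, 6, 8} : Finset (Fin 10)) := by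
  intro t ht
  simp only [T16, List.mem_cons, List.not_mem_nil, or_false] at ht
  rcases ht with rfl | rfl | rfl | rfl | rfl | rfl | rfl | rfl | rfl | rfl | rfl | rfl | rfl | rfl | rfl | rfl <;> decide
lemma U8 : ∀ t ∈ T16, (2 : Fin 10) ∈ t → (4 : Fin 10) ∈ t → t = ({1, 2, 4} : Finset (Fin 10)) ∨ t = ({2, 4, 7} : Finset (Fin 10)) := by
  intro t ht
  simp only [T16, List.mem_cons, List.not_mem_nil, or_false] at ht
  rcases ht with rfl | rfl | rfl | rfl | rfl | rfl | rfl | rfl | rfl | rfl | rfl | rfl | rfl | rfl | rfl | rfl <;> decide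
lemma U9 : ∀ t ∈ T16, (2 : Fin 10) ∈ t → (5 : Fin 10) ∈ t → t = ({2, 5, 7} : Finset (Fin 10)) ∨ t = ({2, 5, 8} : Finset (Fin 10)) := by
  intro t ht
  simp only [T16, List.mem_cons, List.not_mem_nil, or_false] at ht
  rcases ht with rfl | rfl | rfl | rfl | rfl | rfl | rfl | rfl | rfl | rfl | rfl | rfl | rfl | rfl | rfl | rfl <;> decide
lemma U10 : ∀ t ∈ T16, (2 : Fin 10) ∈ t → (7 : Fin 10) ∈ t → t = ({2, 4, 7} : Finset (Fin 10)) ∨ t = ({2, 5, 7} : Finset (Fin 10)) := by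
  intro t ht
  simp only [T16, List.mem_cons, List.not_mem_nil, or_false] at ht
  rcases ht with rfl | rfl | rfl | rfl | rfl | rfl | rfl | rfl | rfl | rfl | rfl | rfl | rfl | rfl | rfl | rfl <;> decide
lemma U11 : ∀ t ∈ T16, (2 : Fin 10) ∈ t → (8 : Fin 10) ∈ t → t = ({1, 2, 8} : Finset (Fin 10)) ∨ t = ({2, 5, 8} : Finset (Fin 10)) := by
  intro t ht
  simp only [T16, List.mem_cons, List.not_mem_nil, or_false] at ht
  rcases ht with rfl | rfl | rfl | rfl | rfl | rfl | rfl | rfl | rfl | rfl | rfl | rfl | rfl | rfl | rfl | rfl <;> decide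
lemma U12 : ∀ t ∈ T16, (3 : Fin 10) ∈ t → (5 : Fin 10) ∈ t → t = ({0, 3, 5} : Finset (Fin 10)) ∨ t = ({3, 5, 8} : Finset (Fin 10)) := by
  intro t ht
  simp only [T16, List.mem_cons, List.not_mem_nil, or_false] at ht
  rcases ht with rfl | rfl | rfl | rfl | rfl | rfl | rfl | rfl | rfl | rfl | rfl | rfl | rfl | rfl | rfl | rfl <;> decide
lemma U13 : ∀ t ∈ T16, (3 : Fin 10) ∈ t → (6 : Fin 10) ∈ t → t = ({3, 6, 8} : Finset (Fin 10)) ∨ t = ({3, 6, 9} : Finset (Fin 10)) := by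
  intro t ht
  simp only [T16, List.mem_cons, List.not_mem_nil, or_false] at ht
  rcases ht with rfl | rfl | rfl | rfl | rfl | rfl | rfl | rfl | rfl | rfl | rfl | rfl | rfl | rfl | rfl | rfl <;> decide
lemma U14 : ∀ t ∈ T16, (3 : Fin 10) ∈ t → (8 : Fin 10) ∈ t → t = ({3, 5, 8} : Finset (Fin 10)) ∨ t = ({3, 6, 8} : Finset (Fin 10)) := by
  intro t ht
  simp only [T16, List.mem_cons, List.not_mem_nil, or_false] at ht
  rcases ht with rfl | rfl | rfl | rfl | rfl | rfl | rfl | rfl | rfl | rfl | rfl | rfl | rfl | rfl | rfl | rfl <;> decide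
lemma U15 : ∀ t ∈ T16, (3 : Fin 10) ∈ t → (9 : Fin 10) ∈ t → t = ({0, 3, 9} : Finset (Fin 10)) ∨ t = ({3, 6, 9} : Finset (Fin 10)) := by
  intro t ht
  simp only [T16, List.mem_cons, List.not_mem_nil, or_false] at ht
  rcases ht with rfl | rfl | rfl | rfl | rfl | rfl | rfl | rfl | rfl | rfl | rfl | rfl | rfl | rfl | rfl | rfl <;> decide
lemma U16 : ∀ t ∈ T16, (4 : Fin 10) ∈ t → (6 : Fin 10) ∈ t → t = ({1, 4, 6} : Finset (Fin 10)) ∨ t = ({4, 6, 9} : Finset (Fin 10)) := by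
  intro t ht
  simp only [T16, List.mem_cons, List.not_mem_nil, or_false] at ht
  rcases ht with rfl | rfl | rfl | rfl | rfl | rfl | rfl | rfl | rfl | rfl | rfl | rfl | rfl | rfl | rfl | rfl <;> decide
lemma U17 : ∀ t ∈ T16, (4 : Fin 10) ∈ t → (7 : Fin 10) ∈ t → t = ({2, 4, 7} : Finset (Fin 10)) ∨ t = ({4, 7, 9} : Finset (Fin 10)) := by
  intro t ht
  simp only [T16, List.mem_cons, List.not_mem_nil, or_false] at ht
  rcases ht with rfl | rfl | rfl | rfl | rfl | rfl | rfl | rfl | rfl | rfl | rfl | rfl | rfl | rfl | rfl | rfl <;> decide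
lemma U18 : ∀ t ∈ T16, (4 : Fin 10) ∈ t → (9 : Fin 10) ∈ t → t = ({4, 6, 9} : Finset (Fin 10)) ∨ t = ({4, 7, 9} : Finset (Fin 10)) := by
  intro t ht
  simp only [T16, List.mem_cons, List.not_mem_nil, or_false] at ht
  rcases ht with rfl | rfl | rfl | rfl | rfl | rfl | rfl | rfl | rfl | rfl | rfl | rfl | rfl | rfl | rfl | rfl <;> decide
lemma U19 : ∀ t ∈ T16, (5 : Fin 10) ∈ t → (7 : Fin 10) ∈ t → t = ({0, 5, 7} : Finset (Fin 10)) ∨ t = ({2, 5, 7} : Finset (Fin 10)) := by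
  intro t ht
  simp only [T16, List.mem_cons, List.not_mem_nil, or_false] at ht
  rcases ht with rfl | rfl | rfl | rfl | rfl | rfl | rfl | rfl | rfl | rfl | rfl | rfl | rfl | rfl | rfl | rfl <;> decide
lemma U20 : ∀ t ∈ T16, (5 : Fin 10) ∈ t → (8 : Fin 10) ∈ t → t = ({2, 5, 8} : Finset (Fin 10)) ∨ t = ({3, 5, 8} : Finset (Fin 10)) := by
  intro t ht
  simp only [T16, List.mem_cons, List.not_mem_nil, or_false] at ht
  rcases ht with rfl | rfl | rfl | rfl | rfl | rfl | rfl | rfl | rfl | rfl | rfl | rfl | rfl | rfl | rfl | rfl <;> decide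
lemma U21 : ∀ t ∈ T16, (6 : Fin 10) ∈ t → (8 : Fin 10) ∈ t → t = ({1, 6, 8} : Finset (Fin 10)) ∨ t = ({3, 6, 8} : Finset (Fin 10)) := by
  intro t ht
  simp only [T16, List.mem_cons, List.not_mem_nil, or_false] at ht
  rcases ht with rfl | rfl | rfl | rfl | rfl | rfl | rfl | rfl | rfl | rfl | rfl | rfl | rfl | rfl | rfl | rfl <;> decide
lemma U22 : ∀ t ∈ T16, (6 : Fin 10) ∈ t → (9 : Fin 10) ∈ t → t = ({3, 6, 9} : Finset (Fin 10)) ∨ t = ({4, 6, 9} : Finset (Fin 10)) := by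
  intro t ht
  simp only [T16, List.mem_cons, List.not_mem_nil, or_false] at ht
  rcases ht with rfl | rfl | rfl | rfl | rfl | rfl | rfl | rfl | rfl | rfl | rfl | rfl | rfl | rfl | rfl | rfl <;> decide
lemma U23 : ∀ t ∈ T16, (7 : Fin 10) ∈ t → (9 : Fin 10) ∈ t → t = ({0, 7, 9} : Finset (Fin 10)) ∨ t = ({4, 7, 9} : Finset (Fin 10)) := by
  intro t ht
  simp only [T16, List.mem_cons, List.not_mem_nil, or_false] at ht
  rcases ht with rfl | rfl | rfl | rfl | rfl | rfl | rfl | rfl | rfl | rfl | rfl | rfl | rfl | rfl | rfl | rfl <;> decide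

lemma filter_len {α : Type*} (p : α → Bool) (a : α) (l : List α) :
    (List.filter p (a :: l)).length = (cond (p a) 1 0) + (List.filter p l).length := by
  cases h : p a <;> (simp [List.filter_cons, h]; try omega)

lemma length_filter_le (L : List (Finset (Fin 10))) (hL : L.Nodup)
    (S : Finset (Finset (Fin 10))) :
    (L.filter (fun t => decide (t ∈ S))).length ≤ S.card := by
  have h1 : (L.filter (fun t => decide (t ∈ S))).Nodup := hL.filter _
  have h2 : (L.filter (fun t => decide (t ∈ S))).toFinset ⊆ S := by
    intro x hx
    rw [List.mem_toFinset] at hx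
    exact of_decide_eq_true (List.mem_filter.mp hx).2
  calc (L.filter (fun t => decide (t ∈ S))).length
      = (L.filter (fun t => decide (t ∈ S))).toFinset.card :=
        (List.toFinset_card_of_nodup h1).symm
    _ ≤ S.card := Finset.card_le_card h2


lemma triangle_cover_bound (S : Finset (Finset (Fin 10)))
    (hS : ∀ t ∈ S, t ∈ T16)
    (hcov : ∀ u v : Fin 10, twisterComplement.Adj u v → ∃ t ∈ S, u ∈ t ∧ v ∈ t) :
    10 ≤ S.card := by
  have key : ∀ (u v : Fin 10) (A B : Finset (Fin 10)), twisterComplement.Adj u v →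
      (∀ t ∈ T16, u ∈ t → v ∈ t → t = A ∨ t = B) → (A ∈ S ∨ B ∈ S) := by
    intro u v A B hadj hAB
    obtain ⟨t, htS, hu, hv⟩ := hcov u v hadj
    rcases hAB t (hS t htS) hu hv with h | h
    · exact Or.inl (h ▸ htS)
    · exact Or.inr (h ▸ htS)
  have e0 : ({0, 3, 5} : Finset (Fin 10)) ∈ S ∨ ({0, 3, 9} : Finset (Fin 10)) ∈ S := key 0 3 _ _ (by decide) U0
  have c0 : (decide (({0, 3, 5} : Finset (Fin 10)) ∈ S) || decide (({0, 3, 9} : Finset (Fin 10)) ∈ S)) = true := by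
    rcases e0 with h | h <;> simp [h]
  have e1 : ({0, 3, 5} : Finset (Fin 10)) ∈ S ∨ ({0, 5, 7} : Finset (Fin 10)) ∈ S := key 0 5 _ _ (by decide) U1
  have c1 : (decide (({0, 3, 5} : Finset (Fin 10)) ∈ S) || decide (({0, 5, 7} : Finset (Fin 10)) ∈ S)) = true := by
    rcases e1 with h | h <;> simp [h]
  have e2 : ({0, 5, 7} : Finset (Fin 10)) ∈ S ∨ ({0, 7, 9} : Finset (Fin 10)) ∈ S := key 0 7 _ _ (by decide) U2
  have c2 : (decide (({0, 5, 7} : Finset (Fin 10)) ∈ S) || decide (({0, 7, 9} : Finset (Fin 10)) ∈ S)) = true := by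
    rcases e2 with h | h <;> simp [h]
  have e3 : ({0, 3, 9} : Finset (Fin 10)) ∈ S ∨ ({0, 7, 9} : Finset (Fin 10)) ∈ S := key 0 9 _ _ (by decide) U3
  have c3 : (decide (({0, 3, 9} : Finset (Fin 10)) ∈ S) || decide (({0, 7, 9} : Finset (Fin 10)) ∈ S)) = true := by
    rcases e3 with h | h <;> simp [h]
  have e4 : ({1, 2, 4} : Finset (Fin 10)) ∈ S ∨ ({1, 2, 8} : Finset (Fin 10)) ∈ S := key 1 2 _ _ (by decide) U4
  have c4 : (decide (({1, 2, 4} : Finset (Fin 10)) ∈ S) || decide (({1, 2, 8} : Finset (Fin 10)) ∈ S)) = true := by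
    rcases e4 with h | h <;> simp [h]
  have e5 : ({1, 2, 4} : Finset (Fin 10)) ∈ S ∨ ({1, 4, 6} : Finset (Fin 10)) ∈ S := key 1 4 _ _ (by decide) U5
  have c5 : (decide (({1, 2, 4} : Finset (Fin 10)) ∈ S) || decide (({1, 4, 6} : Finset (Fin 10)) ∈ S)) = true := by
    rcases e5 with h | h <;> simp [h]
  have e6 : ({1, 4, 6} : Finset (Fin 10)) ∈ S ∨ ({1, 6, 8} : Finset (Fin 10)) ∈ S := key 1 6 _ _ (by decide) U6
  have c6 : (decide (({1, 4, 6} : Finset (Fin 10)) ∈ S) || decide (({1, 6, 8} : Finset (Fin 10)) ∈ S)) = true := by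
    rcases e6 with h | h <;> simp [h]
  have e7 : ({1, 2, 8} : Finset (Fin 10)) ∈ S ∨ ({1, 6, 8} : Finset (Fin 10)) ∈ S := key 1 8 _ _ (by decide) U7
  have c7 : (decide (({1, 2, 8} : Finset (Fin 10)) ∈ S) || decide (({1, 6, 8} : Finset (Fin 10)) ∈ S)) = true := by
    rcases e7 with h | h <;> simp [h]
  have e8 : ({1, 2, 4} : Finset (Fin 10)) ∈ S ∨ ({2, 4, 7} : Finset (Fin 10)) ∈ S := key 2 4 _ _ (by decide) U8
  have c8 : (decide (({1, 2, 4} : Finset (Fin 10)) ∈ S) || decide (({2, 4, 7} : Finset (Fin 10)) ∈ S)) = true := by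
    rcases e8 with h | h <;> simp [h]
  have e9 : ({2, 5, 7} : Finset (Fin 10)) ∈ S ∨ ({2, 5, 8} : Finset (Fin 10)) ∈ S := key 2 5 _ _ (by decide) U9
  have c9 : (decide (({2, 5, 7} : Finset (Fin 10)) ∈ S) || decide (({2, 5, 8} : Finset (Fin 10)) ∈ S)) = true := by
    rcases e9 with h | h <;> simp [h]
  have e10 : ({2, 4, 7} : Finset (Fin 10)) ∈ S ∨ ({2, 5, 7} : Finset (Fin 10)) ∈ S := key 2 7 _ _ (by decide) U10
  have c10 : (decide (({2, 4, 7} : Finset (Fin 10)) ∈ S) || decide (({2, 5, 7} : Finset (Fin 10)) ∈ S)) = true := by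
    rcases e10 with h | h <;> simp [h]
  have e11 : ({1, 2, 8} : Finset (Fin 10)) ∈ S ∨ ({2, 5, 8} : Finset (Fin 10)) ∈ S := key 2 8 _ _ (by decide) U11
  have c11 : (decide (({1, 2, 8} : Finset (Fin 10)) ∈ S) || decide (({2, 5, 8} : Finset (Fin 10)) ∈ S)) = true := by
    rcases e11 with h | h <;> simp [h]
  have e12 : ({0, 3, 5} : Finset (Fin 10)) ∈ S ∨ ({3, 5, 8} : Finset (Fin 10)) ∈ S := key 3 5 _ _ (by decide) U12
  have c12 : (decide (({0, 3, 5} : Finset (Fin 10)) ∈ S) || decide (({3, 5, 8} : Finset (Fin 10)) ∈ S)) = true := by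
    rcases e12 with h | h <;> simp [h]
  have e13 : ({3, 6, 8} : Finset (Fin 10)) ∈ S ∨ ({3, 6, 9} : Finset (Fin 10)) ∈ S := key 3 6 _ _ (by decide) U13
  have c13 : (decide (({3, 6, 8} : Finset (Fin 10)) ∈ S) || decide (({3, 6, 9} : Finset (Fin 10)) ∈ S)) = true := by
    rcases e13 with h | h <;> simp [h]
  have e14 : ({3, 5, 8} : Finset (Fin 10)) ∈ S ∨ ({3, 6, 8} : Finset (Fin 10)) ∈ S := key 3 8 _ _ (by decide) U14
  have c14 : (decide (({3, 5, 8} : Finset (Fin 10)) ∈ S) || decide (({3, 6, 8} : Finset (Fin 10)) ∈ S)) = true := by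
    rcases e14 with h | h <;> simp [h]
  have e15 : ({0, 3, 9} : Finset (Fin 10)) ∈ S ∨ ({3, 6, 9} : Finset (Fin 10)) ∈ S := key 3 9 _ _ (by decide) U15
  have c15 : (decide (({0, 3, 9} : Finset (Fin 10)) ∈ S) || decide (({3, 6, 9} : Finset (Fin 10)) ∈ S)) = true := by
    rcases e15 with h | h <;> simp [h]
  have e16 : ({1, 4, 6} : Finset (Fin 10)) ∈ S ∨ ({4, 6, 9} : Finset (Fin 10)) ∈ S := key 4 6 _ _ (by decide) U16
  have c16 : (decide (({1, 4, 6} : Finset (Fin 10)) ∈ S) || decide (({4, 6, 9} : Finset (Fin 10)) ∈ S)) = true := by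
    rcases e16 with h | h <;> simp [h]
  have e17 : ({2, 4, 7} : Finset (Fin 10)) ∈ S ∨ ({4, 7, 9} : Finset (Fin 10)) ∈ S := key 4 7 _ _ (by decide) U17
  have c17 : (decide (({2, 4, 7} : Finset (Fin 10)) ∈ S) || decide (({4, 7, 9} : Finset (Fin 10)) ∈ S)) = true := by
    rcases e17 with h | h <;> simp [h]
  have e18 : ({4, 6, 9} : Finset (Fin 10)) ∈ S ∨ ({4, 7, 9} : Finset (Fin 10)) ∈ S := key 4 9 _ _ (by decide) U18
  have c18 : (decide (({4, 6, 9} : Finset (Fin 10)) ∈ S) || decide (({4, 7, 9} : Finset (Fin 10)) ∈ S)) = true := by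
    rcases e18 with h | h <;> simp [h]
  have e19 : ({0, 5, 7} : Finset (Fin 10)) ∈ S ∨ ({2, 5, 7} : Finset (Fin 10)) ∈ S := key 5 7 _ _ (by decide) U19
  have c19 : (decide (({0, 5, 7} : Finset (Fin 10)) ∈ S) || decide (({2, 5, 7} : Finset (Fin 10)) ∈ S)) = true := by
    rcases e19 with h | h <;> simp [h]
  have e20 : ({2, 5, 8} : Finset (Fin 10)) ∈ S ∨ ({3, 5, 8} : Finset (Fin 10)) ∈ S := key 5 8 _ _ (by decide) U20
  have c20 : (decide (({2, 5, 8} : Finset (Fin 10)) ∈ S) || decide (({3, 5, 8} : Finset (Fin 10)) ∈ S)) = true := by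
    rcases e20 with h | h <;> simp [h]
  have e21 : ({1, 6, 8} : Finset (Fin 10)) ∈ S ∨ ({3, 6, 8} : Finset (Fin 10)) ∈ S := key 6 8 _ _ (by decide) U21
  have c21 : (decide (({1, 6, 8} : Finset (Fin 10)) ∈ S) || decide (({3, 6, 8} : Finset (Fin 10)) ∈ S)) = true := by
    rcases e21 with h | h <;> simp [h]
  have e22 : ({3, 6, 9} : Finset (Fin 10)) ∈ S ∨ ({4, 6, 9} : Finset (Fin 10)) ∈ S := key 6 9 _ _ (by decide) U22
  have c22 : (decide (({3, 6, 9} : Finset (Fin 10)) ∈ S) || decide (({4, 6, 9} : Finset (Fin 10)) ∈ S)) = true := by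
    rcases e22 with h | h <;> simp [h]
  have e23 : ({0, 7, 9} : Finset (Fin 10)) ∈ S ∨ ({4, 7, 9} : Finset (Fin 10)) ∈ S := key 7 9 _ _ (by decide) U23
  have c23 : (decide (({0, 7, 9} : Finset (Fin 10)) ∈ S) || decide (({4, 7, 9} : Finset (Fin 10)) ∈ S)) = true := by
    rcases e23 with h | h <;> simp [h]
  have hcb := coverBound (decide (({0, 3, 5} : Finset (Fin 10)) ∈ S))
    (decide (({0, 3, 9} : Finset (Fin 10)) ∈ S))
    (decide (({0, 5, 7} : Finset (Fin 10)) ∈ S))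
    (decide (({0, 7, 9} : Finset (Fin 10)) ∈ S))
    (decide (({1, 2, 4} : Finset (Fin 10)) ∈ S))
    (decide (({1, 2, 8} : Finset (Fin 10)) ∈ S))
    (decide (({1, 4, 6} : Finset (Fin 10)) ∈ S))
    (decide (({1, 6, 8} : Finset (Fin 10)) ∈ S))
    (decide (({2, 4, 7} : Finset (Fin 10)) ∈ S))
    (decide (({2, 5, 7} : Finset (Fin 10)) ∈ S))
    (decide (({2, 5, 8} : Finset (Fin 10)) ∈ S))
    (decide (({3, 5, 8} : Finset (Fin 10)) ∈ S))
    (decide (({3, 6, 8} : Finset (Fin 10)) ∈ S))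
    (decide (({3, 6, 9} : Finset (Fin 10)) ∈ S))
    (decide (({4, 6, 9} : Finset (Fin 10)) ∈ S))
    (decide (({4, 7, 9} : Finset (Fin 10)) ∈ S))
    (by simp only [c0, c1, c2, c3, c4, c5, c6, c7, c8, c9, c10, c11, c12, c13, c14, c15, c16, c17, c18, c19, c20, c21, c22, c23]; rfl)
  have hle := length_filter_le T16 (by decide) S
  have hlen : (T16.filter (fun t => decide (t ∈ S))).length =
      (cond (decide (({0, 3, 5} : Finset (Fin 10)) ∈ S)) 1 0) + (cond (decide (({0, 3, 9} : Finset (Fin 10)) ∈ S)) 1 0) + (cond (decide (({0, 5, 7} : Finset (Fin 10)) ∈ S)) 1 0) + (cond (decide (({0, 7, 9} : Finset (Fin 10)) ∈ S)) 1 0) + (cond (decide (({1, 2, 4} : Finset (Fin 10)) ∈ S)) 1 0) + (cond (decide (({1, 2, 8} : Finset (Fin 10)) ∈ S)) 1 0) + (cond (decide (({1, 4, 6} : Finset (Fin 10)) ∈ S)) 1 0) + (cond (decide (({1, 6, 8} : Finset (Fin 10)) ∈ S)) 1 0) + (cond (decide (({2, 4, 7} : Finset (Fin 10)) ∈ S))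 1 0) + (cond (decide (({2, 5, 7} : Finset (Fin 10)) ∈ S)) 1 0) + (cond (decide (({2, 5, 8} : Finset (Fin 10)) ∈ S)) 1 0) + (cond (decide (({3, 5, 8} : Finset (Fin 10)) ∈ S)) 1 0) + (cond (decide (({3, 6, 8} : Finset (Fin 10)) ∈ S)) 1 0) + (cond (decide (({3, 6, 9} : Finset (Fin 10)) ∈ S)) 1 0) + (cond (decide (({4, 6, 9} : Finset (Fin 10)) ∈ S)) 1 0) + (cond (decide (({4, 7, 9} : Finset (Fin 10)) ∈ S)) 1 0) := by
    simp only [T16, filter_len, List.filter_nil, List.length_nil, Nat.add_zero]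
    simp only [Nat.add_assoc]
  exact hcb.trans (hlen ▸ hle)

lemma clique_sub (C : Set (Fin 10)) (hC : twisterComplement.IsClique C) :
    ∃ t ∈ T16, ∀ ⦃u v : Fin 10⦄, twisterComplement.Adj u v → u ∈ C → v ∈ C →
      u ∈ t ∧ v ∈ t := by
  by_cases h : ∃ u v, u ∈ C ∧ v ∈ C ∧ twisterComplement.Adj u v
  · obtain ⟨u0, v0, hu0, hv0, hadj⟩ := h
    by_cases h3 : ∃ w, w ∈ C ∧ w ≠ u0 ∧ w ≠ v0
    · obtain ⟨w0, hw0, hwu, hwv⟩ := h3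
      have h1 : twisterComplement.Adj u0 w0 := hC hu0 hw0 (Ne.symm hwu)
      have h2 : twisterComplement.Adj v0 w0 := hC hv0 hw0 (Ne.symm hwv)
      obtain ⟨t, ht, htu, htv, htw⟩ := B3 u0 v0 w0 hadj h1 h2
      have hsub : ∀ x ∈ C, x = u0 ∨ x = v0 ∨ x = w0 := by
        intro x hx
        by_contra hne
        push_neg at hne
        exact B4 u0 v0 w0 x hadj h1 (hC hu0 hx (Ne.symm hne.1)) h2
          (hC hv0 hx (Ne.symm hne.2.1)) (hC hw0 hx (Ne.symm hne.2.2))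
      refine ⟨t, ht, fun u v _ hu hv => ⟨?_, ?_⟩⟩
      · rcases hsub u hu with rfl | rfl | rfl <;> assumption
      · rcases hsub v hv with rfl | rfl | rfl <;> assumption
    · push_neg at h3
      obtain ⟨t, ht, htu, htv⟩ := B2 u0 v0 hadj
      refine ⟨t, ht, fun u v _ hu hv => ⟨?_, ?_⟩⟩
      · rcases eq_or_ne u u0 with rfl | hne
        · exact htu
        · rw [h3 u hu hne]; exact htv
      · rcases eq_or_ne v u0 with rfl | hne
        · exact htu
        · rw [h3 v hv hne]; exact htv
  · exact ⟨{0, 3, 5}, by simp [T16], fun u v hadj hu hv =>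
      absurd ⟨u, v, hu, hv, hadj⟩ h⟩

lemma lower_bound (𝒞 : Finset (Set (Fin 10)))
    (h : IsEdgeCliqueCover twisterComplement 𝒞) : 10 ≤ 𝒞.card := by
  classical
  have H : ∀ C : Set (Fin 10), ∃ t : Finset (Fin 10), C ∈ 𝒞 →
      t ∈ T16 ∧ ∀ ⦃u v : Fin 10⦄, twisterComplement.Adj u v → u ∈ C → v ∈ C →
        u ∈ t ∧ v ∈ t := by
    intro C
    by_cases hC : C ∈ 𝒞
    · obtain ⟨t, ht, hp⟩ := clique_sub C (h.1 C hC)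
      exact ⟨t, fun _ => ⟨ht, hp⟩⟩
    · exact ⟨∅, fun hc => absurd hc hC⟩
  choose f hf using H
  have hS : ∀ t ∈ 𝒞.image f, t ∈ T16 := by
    intro t ht
    obtain ⟨C, hC, rfl⟩ := Finset.mem_image.mp ht
    exact (hf C hC).1
  have hcov : ∀ u v : Fin 10, twisterComplement.Adj u v →
      ∃ t ∈ 𝒞.image f, u ∈ t ∧ v ∈ t := by
    intro u v hadj
    obtain ⟨C, hC, hu, hv⟩ := h.2 hadj
    exact ⟨f C, Finset.mem_image_of_mem f hC, (hf C hC).2 hadj hu hv⟩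
  calc 10 ≤ (𝒞.image f).card := triangle_cover_bound _ hS hcov
    _ ≤ 𝒞.card := Finset.card_image_le

/-- The clique cover number of the complement of a twister equals `10`. -/
theorem stmt_5 : edgeCliqueCoverNumber twisterComplement = 10 := by
  classical
  have hcov : IsEdgeCliqueCover twisterComplement
      (twisterComplementCliques.toFinset.image ((↑) : Finset (Fin 10) → Set (Fin 10))) := by
    constructor
    · intro Cs hCs
      obtain ⟨D, hD, rfl⟩ := Finset.mem_image.mp hCs
      intro a ha b hb hab
      exact (SimpleGraph.fromRel_adj _ a b).mpr
        ⟨hab, Or.inl ⟨D, List.mem_toFinset.mp hD, Finset.mem_coe.mp ha, Finset.mem_coe.mp hb⟩⟩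
    · intro u v hadj
      unfold twisterComplement at hadj
      rw [SimpleGraph.fromRel_adj] at hadj
      obtain ⟨hne, hr | hr⟩ := hadj <;> obtain ⟨D, hD, h1, h2⟩ := hr
      · exact ⟨(↑D : Set (Fin 10)), Finset.mem_image_of_mem _ (List.mem_toFinset.mpr hD),
          Finset.mem_coe.mpr h1, Finset.mem_coe.mpr h2⟩
      · exact ⟨(↑D : Set (Fin 10)), Finset.mem_image_of_mem _ (List.mem_toFinset.mpr hD),
          Finset.mem_coe.mpr h2, Finset.mem_coe.mpr h1⟩
  have hcard : (twisterComplementCliques.toFinset.image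
      ((↑) : Finset (Fin 10) → Set (Fin 10))).card = 10 := by
    rw [Finset.card_image_of_injective _ Finset.coe_injective,
      List.toFinset_card_of_nodup (by decide)]
    rfl
  have h10 : (10 : ℕ) ∈ {k | ∃ 𝒞 : Finset (Set (Fin 10)),
      IsEdgeCliqueCover twisterComplement 𝒞 ∧ 𝒞.card = k} := ⟨_, hcov, hcard⟩
  refine le_antisymm (Nat.sInf_le h10) (le_csInf ⟨10, h10⟩ ?_)
  rintro k ⟨𝒞, hc, rfl⟩
  exact lower_bound 𝒞 hc
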